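/- arXiv:1606.06760 — 2 statements merged into one kernel-verified Lean document; each statement's English description precedes it below -/
import Mathlib

section
/- Let (s_p)_{p≥1} be natural numbers with 0 ≤ s_p ≤ p for all p ≥ 1 and s_p → ∞ as p → ∞, and define E = ⋃_{p=1}^{∞} {k ∈ ℕ : 2^p ≤ k < 2^{p+1} and ν(k) ≥ s_p}. Then E is a thin set if and only if ∑_{p=1}^{∞} s_p / 2^{s_p} < ∞. -/
open scoped ENNReal

/-- `nu k` is ν(k): the number of trailing 1-bits of `k`, i.e. the maximal `m ≥ 0` such that
the binary digits `ε_0, …, ε_{m-1}` of `k` are all `1`; equivalently the 2-adic valuation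
of `k + 1`. -/
def nu (k : ℕ) : ℕ := padicValNat 2 (k + 1)

/-- The discrete capacity `C(e) = ∑_{k ∈ e} ν(k)`, valued in `[0, ∞]`. -/
noncomputable def cap (e : Set ℕ) : ℝ≥0∞ := ∑' k : e, (nu k : ℝ≥0∞)

/-- The dyadic block `K_p = {k : 2^p ≤ k < 2^(p+1)}`. -/
def Kblock (p : ℕ) : Set ℕ := {k : ℕ | 2 ^ p ≤ k ∧ k < 2 ^ (p + 1)}

/-- A set `e ⊆ ℕ` is thin if `∑_{p=1}^∞ 2^{-p} C(e ∩ K_p) < ∞`. -/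
def Thin (e : Set ℕ) : Prop :=
  ∑' p : ℕ, cap (e ∩ Kblock (p + 1)) / 2 ^ (p + 1) ≠ ⊤

/-- A set `e ⊆ ℕ` is thick if it is not thin. -/
def Thick (e : Set ℕ) : Prop := ¬ Thin e

lemma sum_padic_Ioc_zero (n : ℕ) :
    ∑ j ∈ Finset.Ioc 0 n, padicValNat 2 j = padicValNat 2 n.factorial := by
  induction n with
  | zero => simp
  | succ n ih =>
    rw [← Finset.Icc_add_one_left_eq_Ioc] at ih ⊢
    rw [Finset.sum_Icc_succ_top (by omega), ih, Nat.factorial_succ,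
      padicValNat.mul (Nat.succ_ne_zero n) (Nat.factorial_ne_zero n), add_comm]

lemma sum_padic_block (t : ℕ) :
    ∑ j ∈ Finset.Ioc (2 ^ t) (2 ^ (t + 1)), padicValNat 2 j = 2 ^ t := by
  have h1 := Finset.sum_Ioc_consecutive (fun j => padicValNat 2 j)
    (Nat.zero_le (2 ^ t)) (Nat.pow_le_pow_right (by norm_num) (by omega : t ≤ t + 1))
  rw [sum_padic_Ioc_zero, sum_padic_Ioc_zero] at h1
  have h2 : padicValNat 2 (2 ^ (t + 1)).factorial = padicValNat 2 (2 ^ t).factorial + 2 ^ t := by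
    have : 2 ^ (t + 1) = 2 * 2 ^ t := by ring
    rw [this, padicValNat_factorial_mul]
  beta_reduce at h1
  omega

/-- The main count: the total `nu`-mass of `{k ∈ [2^q, 2^(q+1)) : nu k ≥ s}` is
`(s+1) * 2^(q-s)` when `s ≤ q`. -/
lemma count_lemma (q s : ℕ) (hsq : s ≤ q) :
    ∑ k ∈ (Finset.Ico (2 ^ q) (2 ^ (q + 1))).filter (fun k => s ≤ nu k), nu k
      = (s + 1) * 2 ^ (q - s) := by
  obtain ⟨t, rfl⟩ : ∃ t, q = t + s := ⟨q - s, by omega⟩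
  have h2s : (0:ℕ) < 2 ^ s := pow_pos (by norm_num) s
  have key : ∑ k ∈ (Finset.Ico (2 ^ (t + s)) (2 ^ (t + s + 1))).filter (fun k => s ≤ nu k), nu k
      = ∑ j ∈ Finset.Ioc (2 ^ t) (2 ^ (t + 1)), (padicValNat 2 j + s) := by
    apply Finset.sum_nbij' (i := fun k => (k + 1) / 2 ^ s) (j := fun j => j * 2 ^ s - 1)
    · intro k hk
      simp only [Finset.mem_filter, Finset.mem_Ico] at hk
      obtain ⟨⟨hk1, hk2⟩, hk3⟩ := hk
      have hdvd : 2 ^ s ∣ k + 1 :=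
        dvd_trans (pow_dvd_pow 2 hk3) (pow_padicValNat_dvd (p := 2) (n := k + 1))
      have heq : (k + 1) / 2 ^ s * 2 ^ s = k + 1 := Nat.div_mul_cancel hdvd
      simp only [Finset.mem_Ioc]
      constructor
      · by_contra h
        push_neg at h
        have : (k + 1) / 2 ^ s * 2 ^ s ≤ 2 ^ t * 2 ^ s := Nat.mul_le_mul_right _ h
        rw [heq, ← pow_add] at this
        omega
      · by_contra h
        push_neg at h
        have : 2 ^ (t + 1) * 2 ^ s < (k + 1) / 2 ^ s * 2 ^ s :=
          (Nat.mul_lt_mul_right h2s).mpr h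
        rw [heq, ← pow_add] at this
        have : 2 ^ (t + s + 1) < k + 1 := by
          have e : t + 1 + s = t + s + 1 := by ring
          rw [e] at this; exact this
        omega
    · intro j hj
      simp only [Finset.mem_Ioc] at hj
      obtain ⟨hj1, hj2⟩ := hj
      have hjpos : 1 ≤ j := by
        have := Nat.one_le_two_pow (n := t); omega
      have hpos : 1 ≤ j * 2 ^ s := Nat.one_le_iff_ne_zero.mpr (by positivity)
      have hk1 : j * 2 ^ s - 1 + 1 = j * 2 ^ s := by omega
      have hnu : nu (j * 2 ^ s - 1) = padicValNat 2 j + s := by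
        unfold nu
        rw [hk1, padicValNat.mul (by omega) (by positivity), padicValNat.prime_pow]
      simp only [Finset.mem_filter, Finset.mem_Ico]
      refine ⟨⟨?_, ?_⟩, by omega⟩
      · have : (2 ^ t + 1) * 2 ^ s ≤ j * 2 ^ s := Nat.mul_le_mul_right _ (by omega)
        rw [add_mul, one_mul, ← pow_add] at this
        omega
      · have : j * 2 ^ s ≤ 2 ^ (t + 1) * 2 ^ s := Nat.mul_le_mul_right _ hj2
        rw [← pow_add] at this
        have e : t + 1 + s = t + s + 1 := by ring
        rw [e] at this
        omega
    · intro k hk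
      simp only [Finset.mem_filter, Finset.mem_Ico] at hk
      have hdvd : 2 ^ s ∣ k + 1 :=
        dvd_trans (pow_dvd_pow 2 hk.2) (pow_padicValNat_dvd (p := 2) (n := k + 1))
      have heq : (k + 1) / 2 ^ s * 2 ^ s = k + 1 := Nat.div_mul_cancel hdvd
      omega
    · intro j hj
      simp only [Finset.mem_Ioc] at hj
      have hjpos : 1 ≤ j := by
        have := Nat.one_le_two_pow (n := t); omega
      have hpos : 1 ≤ j * 2 ^ s := Nat.one_le_iff_ne_zero.mpr (by positivity)
      have hk1 : j * 2 ^ s - 1 + 1 = j * 2 ^ s := by omega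
      rw [hk1, Nat.mul_div_cancel _ h2s]
    · intro k hk
      simp only [Finset.mem_filter, Finset.mem_Ico] at hk
      have hdvd : 2 ^ s ∣ k + 1 :=
        dvd_trans (pow_dvd_pow 2 hk.2) (pow_padicValNat_dvd (p := 2) (n := k + 1))
      have heq : (k + 1) / 2 ^ s * 2 ^ s = k + 1 := Nat.div_mul_cancel hdvd
      have hjpos : (k + 1) / 2 ^ s ≠ 0 := by
        intro h; rw [h] at heq; omega
      unfold nu
      conv_lhs => rw [← heq]
      rw [padicValNat.mul hjpos (by positivity), padicValNat.prime_pow]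
  rw [key, Finset.sum_add_distrib, sum_padic_block, Finset.sum_const, Nat.card_Ioc,
    smul_eq_mul]
  have : 2 ^ (t + 1) - 2 ^ t = 2 ^ t := by
    have : (2:ℕ) ^ (t + 1) = 2 * 2 ^ t := by ring
    omega
  rw [this]
  have : t + s - s = t := by omega
  rw [this]
  ring

lemma inter_eq (s : ℕ → ℕ) (q : ℕ) (hq : 1 ≤ q) :
    {k : ℕ | ∃ p, 1 ≤ p ∧ 2 ^ p ≤ k ∧ k < 2 ^ (p + 1) ∧ s p ≤ nu k} ∩ Kblock q
      = ↑((Finset.Ico (2 ^ q) (2 ^ (q + 1))).filter (fun k => s q ≤ nu k)) := by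
  ext k
  simp only [Set.mem_inter_iff, Set.mem_setOf_eq, Kblock, Finset.coe_filter,
    Finset.mem_Ico]
  constructor
  · rintro ⟨⟨p, hp1, hp2, hp3, hp4⟩, h1, h2⟩
    have hpq : p = q := by
      by_contra h
      rcases Nat.lt_or_ge p q with h' | h'
      · have : (2:ℕ) ^ (p + 1) ≤ 2 ^ q := Nat.pow_le_pow_right (by norm_num) (by omega)
        omega
      · have : (2:ℕ) ^ (q + 1) ≤ 2 ^ p := Nat.pow_le_pow_right (by norm_num) (by omega)
        omega
    subst hpq
    exact ⟨⟨h1, h2⟩, hp4⟩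
  · rintro ⟨⟨h1, h2⟩, h3⟩
    exact ⟨⟨q, hq, h1, h2, h3⟩, h1, h2⟩

lemma cap_eq (s : ℕ → ℕ) (q : ℕ) (hq : 1 ≤ q) (hsq : s q ≤ q) :
    cap ({k : ℕ | ∃ p, 1 ≤ p ∧ 2 ^ p ≤ k ∧ k < 2 ^ (p + 1) ∧ s p ≤ nu k} ∩ Kblock q)
      = ((s q + 1) * 2 ^ (q - s q) : ℕ) := by
  rw [inter_eq s q hq]
  unfold cap
  rw [Finset.tsum_subtype' ((Finset.Ico (2 ^ q) (2 ^ (q + 1))).filter (fun k => s q ≤ nu k))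
    (fun k => (nu k : ℝ≥0∞))]
  rw [← Nat.cast_sum, count_lemma q (s q) hsq]

/-- Proposition 2: for `0 ≤ s_p ≤ p` with `s_p → ∞`, the set
`E = ⋃_{p≥1} {k : 2^p ≤ k < 2^(p+1), ν(k) ≥ s_p}` is thin iff `∑_{p≥1} s_p / 2^(s_p) < ∞`. -/
theorem thin_iff_summable (s : ℕ → ℕ) (hs : ∀ p, 1 ≤ p → s p ≤ p)
    (hstend : Filter.Tendsto s Filter.atTop Filter.atTop) :
    Thin {k : ℕ | ∃ p, 1 ≤ p ∧ 2 ^ p ≤ k ∧ k < 2 ^ (p + 1) ∧ s p ≤ nu k} ↔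
      ∑' p : ℕ, (s (p + 1) : ℝ≥0∞) / 2 ^ s (p + 1) ≠ ⊤ := by
  have hterm : ∀ p : ℕ,
      cap ({k : ℕ | ∃ p, 1 ≤ p ∧ 2 ^ p ≤ k ∧ k < 2 ^ (p + 1) ∧ s p ≤ nu k} ∩ Kblock (p + 1))
        / 2 ^ (p + 1) = ((s (p + 1) : ℝ≥0∞) + 1) / 2 ^ s (p + 1) := by
    intro p
    set q := p + 1 with hqdef
    have hq : 1 ≤ q := by omega
    have hsq : s q ≤ q := hs q hq
    rw [cap_eq s q hq hsq]
    push_cast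
    have hpow : (2 : ℝ≥0∞) ^ q = 2 ^ (q - s q) * 2 ^ s q := by
      rw [← pow_add]; congr 1; omega
    rw [hpow, mul_comm ((2:ℝ≥0∞) ^ (q - s q)) (2 ^ s q),
      ENNReal.mul_div_mul_right _ _ (by positivity) (by
        exact ENNReal.pow_ne_top (by norm_num))]
  unfold Thin
  rw [tsum_congr hterm]
  -- now compare ∑ (s+1)/2^s with ∑ s/2^s
  set a : ℕ → ℝ≥0∞ := fun p => (s (p + 1) : ℝ≥0∞) / 2 ^ s (p + 1) with ha
  set b : ℕ → ℝ≥0∞ := fun p => ((s (p + 1) : ℝ≥0∞) + 1) / 2 ^ s (p + 1) with hb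
  obtain ⟨N, hN⟩ : ∃ N, ∀ p ≥ N, 1 ≤ s p :=
    (hstend.eventually_ge_atTop 1).exists_forall_of_atTop
  constructor
  · intro h
    intro h'
    apply h
    have : ∑' p, b p = ⊤ := by
      refine eq_top_iff.mpr ?_
      rw [← h']
      exact ENNReal.tsum_le_tsum fun p =>
        ENNReal.div_le_div_right (by simp [le_add_iff_nonneg_right]) _
    exact this
  · intro h
    have hbound : ∀ p, b p ≤ 2 * a p + (if p + 1 < N then 1 else 0) := by
      intro p
      by_cases hp : p + 1 < N
      · simp only [if_pos hp]
        have h1 : b p = a p + 1 / 2 ^ s (p + 1) := by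
          simp only [hb, ha]
          rw [ENNReal.add_div]
        rw [h1]
        have hone : (1 : ℝ≥0∞) ≤ 2 ^ s (p + 1) := one_le_pow_of_one_le' one_le_two _
        have h2 : (1 : ℝ≥0∞) / 2 ^ s (p + 1) ≤ 1 :=
          ENNReal.div_le_of_le_mul (by simpa using hone)
        calc a p + 1 / 2 ^ s (p + 1) ≤ a p + 1 := add_le_add le_rfl h2
          _ ≤ 2 * a p + 1 := by
              gcongr
              exact le_mul_of_one_le_left (by positivity) one_le_two
      · simp only [if_neg hp, add_zero]
        have hs1 : 1 ≤ s (p + 1) := hN (p + 1) (by omega)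
        have : ((s (p + 1) : ℝ≥0∞) + 1) ≤ 2 * (s (p + 1) : ℝ≥0∞) := by
          have : (s (p + 1) + 1 : ℕ) ≤ 2 * s (p + 1) := by omega
          calc ((s (p + 1) : ℝ≥0∞) + 1) = ((s (p + 1) + 1 : ℕ) : ℝ≥0∞) := by push_cast; ring
            _ ≤ ((2 * s (p + 1) : ℕ) : ℝ≥0∞) := by exact_mod_cast Nat.cast_le.mpr this
            _ = 2 * (s (p + 1) : ℝ≥0∞) := by push_cast; ring
        calc b p ≤ 2 * (s (p + 1) : ℝ≥0∞) / 2 ^ s (p + 1) :=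
              ENNReal.div_le_div_right this _
          _ = 2 * a p := by rw [ha, mul_div_assoc]
    have hsum : ∑' p, b p ≤ 2 * ∑' p, a p + N := by
      calc ∑' p, b p ≤ ∑' p, (2 * a p + (if p + 1 < N then 1 else 0)) :=
            ENNReal.tsum_le_tsum hbound
        _ = ∑' p, 2 * a p + ∑' p, (if p + 1 < N then (1:ℝ≥0∞) else 0) := ENNReal.tsum_add
        _ = 2 * ∑' p, a p + ∑' p, (if p + 1 < N then (1:ℝ≥0∞) else 0) := by
            rw [ENNReal.tsum_mul_left]
        _ ≤ 2 * ∑' p, a p + N := by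
            gcongr
            have : ∑' p, (if p + 1 < N then (1:ℝ≥0∞) else 0)
                = ∑ p ∈ Finset.range N, (if p + 1 < N then (1:ℝ≥0∞) else 0) := by
              apply tsum_eq_sum
              intro p hp
              simp only [Finset.mem_range, not_lt] at hp
              simp [Nat.not_lt.mpr (by omega : N ≤ p + 1)]
            rw [this]
            calc ∑ p ∈ Finset.range N, (if p + 1 < N then (1:ℝ≥0∞) else 0)
                ≤ ∑ p ∈ Finset.range N, (1:ℝ≥0∞) := by
                  apply Finset.sum_le_sum; intro i _; split <;> simp
              _ = N := by simp
    intro hcontra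
    rw [hcontra] at hsum
    have : (2 : ℝ≥0∞) * ∑' p, a p + N ≠ ⊤ := by
      apply ENNReal.add_ne_top.mpr
      exact ⟨ENNReal.mul_ne_top (by norm_num) h, ENNReal.natCast_ne_top N⟩
    exact this (top_le_iff.mp hsum)
end

section
/- Let (s_p)_{p≥1} be natural numbers with 0 ≤ s_p ≤ p for all p ≥ 1 and s_p → ∞ as p → ∞, and let E = ⋃_{p=1}^{∞} {k ∈ ℕ : 2^p ≤ k < 2^{p+1} and ν(k) ≥ s_p}. Then E has zero density in the natural numbers: ρ_m(E) = |{k ∈ E : 1 ≤ k ≤ m}| / m → 0 as m → ∞. -/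
/-- `ρ_m(E) = |{k ∈ E : 1 ≤ k ≤ m}| / m`, the density of `E` up to `m`. -/
noncomputable def rho (E : Set ℕ) (m : ℕ) : ℝ := (E ∩ Set.Icc 1 m).ncard / m

lemma nu_le_iff {S k : ℕ} : S ≤ nu k ↔ 2 ^ S ∣ (k + 1) :=
  (padicValNat_dvd_iff_le (by omega)).symm

lemma block_card (p S : ℕ) (hS : S ≤ p) :
    ((Finset.Ico (2^p) (2^(p+1))).filter (fun k => S ≤ nu k)).card ≤ 2 ^ (p - S) := by
  have h2S : (0:ℕ) < 2^S := Nat.pow_pos (by norm_num)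
  have hps : 2^p = 2^S * 2^(p-S) := by rw [← pow_add]; congr 1; omega
  have hps1 : 2^(p+1) = 2^S * 2^(p+1-S) := by rw [← pow_add]; congr 1; omega
  have key : ((Finset.Ico (2^p) (2^(p+1))).filter (fun k => S ≤ nu k)).card
      ≤ (Finset.Ioc (2^(p-S)) (2^(p+1-S))).card := by
    apply Finset.card_le_card_of_injOn (fun k => (k+1) / 2^S)
    · intro k hk
      simp only [Finset.mem_coe, Finset.mem_filter, Finset.mem_Ico] at hk
      obtain ⟨⟨h1, h2⟩, h3⟩ := hk
      obtain ⟨j, hj⟩ := nu_le_iff.mp h3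
      have hjv : (k+1) / 2^S = j := by rw [hj]; exact Nat.mul_div_cancel_left _ h2S
      simp only [Finset.mem_coe, Finset.mem_Ioc, hjv]
      constructor
      · have : 2^S * 2^(p-S) < 2^S * j := by rw [← hps]; omega
        exact lt_of_mul_lt_mul_left this (Nat.zero_le _)
      · have : 2^S * j ≤ 2^S * 2^(p+1-S) := by rw [← hps1]; omega
        exact Nat.le_of_mul_le_mul_left this h2S
    · intro a ha b hb hab
      simp only [Finset.mem_coe, Finset.mem_filter] at ha hb
      have hda := nu_le_iff.mp ha.2
      have hdb := nu_le_iff.mp hb.2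
      have ea : 2^S * ((a+1) / 2^S) = a + 1 := Nat.mul_div_cancel' hda
      have eb : 2^S * ((b+1) / 2^S) = b + 1 := Nat.mul_div_cancel' hdb
      simp only at hab
      rw [hab] at ea
      omega
  rw [Nat.card_Ioc] at key
  have : 2^(p+1-S) = 2 * 2^(p-S) := by rw [← pow_succ']; congr 1; omega
  omega

lemma sum_two_pow (n : ℕ) : ∑ i ∈ Finset.range n, 2^i = 2^n - 1 := by
  induction n with
  | zero => simp
  | succ n ih =>
    rw [Finset.sum_range_succ, ih]
    have h1 : 1 ≤ 2^n := Nat.one_le_two_pow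
    have h2 : 2^(n+1) = 2 * 2^n := by rw [pow_succ]; ring
    omega

lemma sum_bound (s : ℕ → ℕ) (S N P : ℕ) (hSN : S ≤ N)
    (hsp : ∀ p, N ≤ p → S ≤ s p) :
    ∑ p ∈ Finset.Icc 1 P, 2 ^ (p - s p) ≤ 2 ^ N + 2 ^ (P + 1 - S) := by
  have hsub : Finset.Icc 1 P ⊆ Finset.range N ∪ Finset.Icc N P := by
    intro p hp
    simp only [Finset.mem_Icc, Finset.mem_range, Finset.mem_union] at *
    omega
  have hdisj : Disjoint (Finset.range N) (Finset.Icc N P) := by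
    rw [Finset.disjoint_left]
    intro p hp hp'
    simp only [Finset.mem_Icc, Finset.mem_range] at *
    omega
  have h1 : ∑ p ∈ Finset.range N, 2^(p - s p) ≤ 2^N := by
    calc ∑ p ∈ Finset.range N, 2^(p - s p) ≤ ∑ p ∈ Finset.range N, 2^p :=
          Finset.sum_le_sum fun p _ => Nat.pow_le_pow_right (by norm_num) (Nat.sub_le _ _)
      _ = 2^N - 1 := sum_two_pow N
      _ ≤ 2^N := Nat.sub_le _ _
  have h2 : ∑ p ∈ Finset.Icc N P, 2^(p - s p) ≤ 2^(P + 1 - S) := by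
    rcases lt_or_ge P N with h | h
    · rw [Finset.Icc_eq_empty (by omega)]
      simp
    · have h2S : (0:ℕ) < 2^S := Nat.pow_pos (by norm_num)
      have step1 : ∑ p ∈ Finset.Icc N P, 2^(p - s p) ≤ ∑ p ∈ Finset.Icc N P, 2^(p - S) := by
        apply Finset.sum_le_sum
        intro p hp
        simp only [Finset.mem_Icc] at hp
        exact Nat.pow_le_pow_right (by norm_num) (by have := hsp p hp.1; omega)
      have step2 : (∑ p ∈ Finset.Icc N P, 2^(p - S)) * 2^S ≤ 2^(P + 1 - S) * 2^S := by
        rw [Finset.sum_mul]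
        have : ∀ p ∈ Finset.Icc N P, 2^(p-S) * 2^S = 2^p := by
          intro p hp
          simp only [Finset.mem_Icc] at hp
          rw [← pow_add]
          congr 1
          omega
        rw [Finset.sum_congr rfl this]
        calc ∑ p ∈ Finset.Icc N P, 2^p ≤ ∑ p ∈ Finset.range (P+1), 2^p :=
              Finset.sum_le_sum_of_subset (by intro p hp; simp only [Finset.mem_Icc, Finset.mem_range] at *; omega)
          _ = 2^(P+1) - 1 := sum_two_pow _
          _ ≤ 2^(P+1) := Nat.sub_le _ _
          _ = 2^(P+1-S) * 2^S := by rw [← pow_add]; congr 1; omega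
      exact le_trans step1 (Nat.le_of_mul_le_mul_right step2 h2S)
  calc ∑ p ∈ Finset.Icc 1 P, 2^(p - s p)
      ≤ ∑ p ∈ Finset.range N ∪ Finset.Icc N P, 2^(p - s p) :=
        Finset.sum_le_sum_of_subset hsub
    _ = ∑ p ∈ Finset.range N, 2^(p - s p) + ∑ p ∈ Finset.Icc N P, 2^(p - s p) :=
        Finset.sum_union hdisj
    _ ≤ 2^N + 2^(P + 1 - S) := Nat.add_le_add h1 h2

lemma count_bound (s : ℕ → ℕ) (hs : ∀ p, 1 ≤ p → s p ≤ p) (m : ℕ) (hm : 1 ≤ m) :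
    ({k : ℕ | ∃ p, 1 ≤ p ∧ 2 ^ p ≤ k ∧ k < 2 ^ (p + 1) ∧ s p ≤ nu k} ∩ Set.Icc 1 m).ncard
      ≤ ∑ p ∈ Finset.Icc 1 (Nat.log 2 m), 2 ^ (p - s p) := by
  classical
  set P := Nat.log 2 m with hP
  set F := (Finset.Icc 1 P).biUnion
    (fun p => (Finset.Ico (2^p) (2^(p+1))).filter (fun k => s p ≤ nu k)) with hF
  have hsub : ({k : ℕ | ∃ p, 1 ≤ p ∧ 2 ^ p ≤ k ∧ k < 2 ^ (p + 1) ∧ s p ≤ nu k}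
      ∩ Set.Icc 1 m) ⊆ ↑F := by
    rintro k ⟨⟨p, hp1, hp2, hp3, hp4⟩, hk1, hk2⟩
    have hpP : p ≤ P := by
      rw [hP, Nat.le_log_iff_pow_le (by norm_num) (by omega)]
      exact le_trans hp2 hk2
    refine Finset.mem_coe.mpr (Finset.mem_biUnion.mpr ⟨p, ?_, ?_⟩)
    · simp only [Finset.mem_Icc]; omega
    · simp only [Finset.mem_filter, Finset.mem_Ico]
      exact ⟨⟨hp2, hp3⟩, hp4⟩
  calc ({k : ℕ | ∃ p, 1 ≤ p ∧ 2 ^ p ≤ k ∧ k < 2 ^ (p + 1) ∧ s p ≤ nu k}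
        ∩ Set.Icc 1 m).ncard ≤ (↑F : Set ℕ).ncard :=
        Set.ncard_le_ncard hsub F.finite_toSet
    _ = F.card := Set.ncard_coe_finset F
    _ ≤ ∑ p ∈ Finset.Icc 1 P, ((Finset.Ico (2^p) (2^(p+1))).filter (fun k => s p ≤ nu k)).card :=
        Finset.card_biUnion_le
    _ ≤ ∑ p ∈ Finset.Icc 1 P, 2 ^ (p - s p) := by
        apply Finset.sum_le_sum
        intro p hp
        simp only [Finset.mem_Icc] at hp
        exact block_card p (s p) (hs p hp.1)

/-- For `0 ≤ s_p ≤ p` with `s_p → ∞`, the set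
`E = ⋃_{p≥1} {k : 2^p ≤ k < 2^(p+1), ν(k) ≥ s_p}` has zero density in `ℕ`:
`ρ_m(E) → 0` as `m → ∞`. -/
theorem density_zero (s : ℕ → ℕ) (hs : ∀ p, 1 ≤ p → s p ≤ p)
    (hstend : Filter.Tendsto s Filter.atTop Filter.atTop) :
    Filter.Tendsto
      (fun m : ℕ => rho {k : ℕ | ∃ p, 1 ≤ p ∧ 2 ^ p ≤ k ∧ k < 2 ^ (p + 1) ∧ s p ≤ nu k} m)
      Filter.atTop (nhds 0) := by
  rw [NormedAddCommGroup.tendsto_nhds_zero]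
  intro ε hε
  obtain ⟨S, hS⟩ := pow_unbounded_of_one_lt ((4:ℝ)/ε) (by norm_num : (1:ℝ) < 2)
  obtain ⟨N0, hN0⟩ := Filter.eventually_atTop.mp (hstend.eventually_ge_atTop S)
  set N := max N0 S with hN
  have hsp : ∀ p, N ≤ p → S ≤ s p := fun p hp => hN0 p (le_trans (le_max_left _ _) hp)
  have hSN : S ≤ N := le_max_right _ _
  have h4 : (4:ℝ) < ε * 2^S := by
    rw [div_lt_iff₀ hε] at hS
    linarith
  have hdiv : Filter.Tendsto (fun m : ℕ => ((2:ℝ)^N) / m) Filter.atTop (nhds 0) :=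
    tendsto_const_div_atTop_nhds_zero_nat _
  filter_upwards [Filter.eventually_ge_atTop (2^S), Filter.eventually_ge_atTop 1,
    hdiv.eventually_lt_const (half_pos hε)] with m hmS hm1 hmN
  set P := Nat.log 2 m with hP
  have hSP : S ≤ P := (Nat.le_log_iff_pow_le (by norm_num) (by omega)).mpr hmS
  have hcount := le_trans (count_bound s hs m hm1) (sum_bound s S N P hSN hsp)
  have hpow : 2^(P+1-S) * 2^S = 2 * 2^P := by
    rw [← pow_add]
    have : P + 1 - S + S = P + 1 := by omega
    rw [this, pow_succ]
    ring
  have h2Pm : 2^P ≤ m := Nat.pow_log_le_self 2 (by omega)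
  -- cast to ℝ
  have hm0 : (0:ℝ) < m := by positivity
  have hA : (({k : ℕ | ∃ p, 1 ≤ p ∧ 2 ^ p ≤ k ∧ k < 2 ^ (p + 1) ∧ s p ≤ nu k}
      ∩ Set.Icc 1 m).ncard : ℝ) ≤ (2:ℝ)^N + (2^(P+1-S) : ℕ) := by
    exact_mod_cast hcount
  have hB : ((2^(P+1-S) : ℕ) : ℝ) * 2^S = 2 * 2^P := by exact_mod_cast hpow
  have hC : (2:ℝ)^P ≤ m := by exact_mod_cast h2Pm
  have h2Spos : (0:ℝ) < 2^S := by positivity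
  have hX : ((2^(P+1-S) : ℕ) : ℝ) < (ε/2) * m := by
    have h1 : ((2^(P+1-S) : ℕ) : ℝ) * 2^S ≤ 2 * m := by rw [hB]; linarith
    nlinarith [mul_pos hm0 h2Spos]
  have hNm : (2:ℝ)^N < (ε/2) * m := by
    rw [div_lt_iff₀ hm0] at hmN
    linarith
  rw [rho, Real.norm_eq_abs, abs_of_nonneg (by positivity), div_lt_iff₀ hm0]
  calc (({k : ℕ | ∃ p, 1 ≤ p ∧ 2 ^ p ≤ k ∧ k < 2 ^ (p + 1) ∧ s p ≤ nu k}
        ∩ Set.Icc 1 m).ncard : ℝ) ≤ (2:ℝ)^N + (2^(P+1-S) : ℕ) := hA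
    _ < (ε/2) * m + (ε/2) * m := by linarith
    _ = ε * m := by ring
end
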